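/- Let K_ℓ, K_r, G : ℝ → ℝ be differentiable on (0,∞). Suppose that for all u, v > 0 both conservation identities hold: (∂/∂v)[K_ℓ(uv)/u²] + (∂/∂u)[G(uv)/(u·v)] = 0 and (∂/∂u)[K_r(uv)/v²] + (∂/∂v)[G(uv)/(u·v)] = 0. Then the function K_ℓ − K_r is constant on (0,∞). -/

import Mathlib

/-- The 't Hooft anomaly coefficient `K_ℓ − K_r` of a conserved `U(1)` current is a
renormalization group invariant: with two-point functions `⟨J₊J₊⟩ = K_ℓ(uv)/u²`,
`⟨J₋J₋⟩ = K_r(uv)/v²`, `⟨J₊J₋⟩ = G(uv)/(uv)`, the two conservation identities imply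
that `K_ℓ − K_r` is constant on `(0,∞)`. -/
theorem tHooft_anomaly_coefficient_is_RG_invariant
    (Kl Kr G : ℝ → ℝ)
    (hKl : ∀ s : ℝ, 0 < s → DifferentiableAt ℝ Kl s)
    (hKr : ∀ s : ℝ, 0 < s → DifferentiableAt ℝ Kr s)
    (hG : ∀ s : ℝ, 0 < s → DifferentiableAt ℝ G s)
    (hconsL : ∀ u v : ℝ, 0 < u → 0 < v →
        deriv (fun v' : ℝ => Kl (u * v') / u ^ 2) v
          + deriv (fun u' : ℝ => G (u' * v) / (u' * v)) u = 0)
    (hconsR : ∀ u v : ℝ, 0 < u → 0 < v →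
        deriv (fun u' : ℝ => Kr (u' * v) / v ^ 2) u
          + deriv (fun v' : ℝ => G (u * v') / (u * v')) v = 0) :
    ∃ c : ℝ, ∀ s : ℝ, 0 < s → Kl s - Kr s = c := by
  -- key: derivatives of Kl and Kr agree on (0,∞)
  have key : ∀ s : ℝ, 0 < s → deriv Kl s = deriv Kr s := by
    intro s hs
    have hs0 : s ≠ 0 := ne_of_gt hs
    have hL := hconsL s 1 hs one_pos
    have hR := hconsR s 1 hs one_pos
    simp only [mul_one] at hL hR
    -- compute deriv (fun v' => Kl (s * v') / s ^ 2) 1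
    have hinner1 : HasDerivAt (fun v' : ℝ => s * v') s 1 := by
      simpa using (hasDerivAt_id (1:ℝ)).const_mul s
    have hKl' : HasDerivAt (fun v' : ℝ => Kl (s * v') / s ^ 2)
        ((deriv Kl s * s) / s ^ 2) 1 := by
      have houter : HasDerivAt Kl (deriv Kl s) (s * 1) := by
        rw [mul_one]; exact (hKl s hs).hasDerivAt
      have hcomp : HasDerivAt (fun v' : ℝ => Kl (s * v')) (deriv Kl s * s) 1 :=
        houter.comp 1 hinner1
      exact hcomp.div_const _
    -- compute deriv (fun u' => G u' / u') s
    have hGdiv : HasDerivAt (fun u' : ℝ => G u' / u')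
        ((deriv G s * s - G s * 1) / s ^ 2) s :=
      (hG s hs).hasDerivAt.div (hasDerivAt_id s) hs0
    rw [hKl'.deriv, hGdiv.deriv] at hL
    -- compute deriv (fun u' => Kr u' / 1 ^ 2) s
    have hKr' : HasDerivAt (fun u' : ℝ => Kr u' / (1:ℝ) ^ 2) (deriv Kr s / (1:ℝ) ^ 2) s :=
      (hKr s hs).hasDerivAt.div_const ((1:ℝ)^2)
    -- compute deriv (fun v' => G (s * v') / (s * v')) 1
    have houterG : HasDerivAt G (deriv G s) (s * 1) := by
      rw [mul_one]; exact (hG s hs).hasDerivAt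
    have hGcomp : HasDerivAt (fun v' : ℝ => G (s * v')) (deriv G s * s) 1 :=
      houterG.comp 1 hinner1
    have hG2 : HasDerivAt (fun v' : ℝ => G (s * v') / (s * v'))
        ((deriv G s * s * (s * 1) - G (s * 1) * s) / (s * 1) ^ 2) 1 :=
      hGcomp.div hinner1 (by simpa using hs0)
    rw [hKr'.deriv, hG2.deriv] at hR
    simp only [mul_one] at hL hR
    have h1 : deriv Kl s * s + deriv G s * s - G s = 0 := by
      field_simp at hL
      nlinarith [hL, sq_nonneg s]
    have h2 : deriv Kr s * s + deriv G s * s - G s = 0 := by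
      field_simp at hR
      nlinarith [hR, sq_nonneg s]
    have : (deriv Kl s - deriv Kr s) * s = 0 := by nlinarith [h1, h2]
    rcases mul_eq_zero.mp this with h | h
    · linarith
    · exact absurd h hs0
  -- conclusion: Kl - Kr is constant on the convex set Ioi 0
  set f : ℝ → ℝ := fun s => Kl s - Kr s with hf
  have hdf : ∀ x ∈ Set.Ioi (0:ℝ), HasDerivAt f 0 x := by
    intro x hx
    have hx' : (0:ℝ) < x := hx
    have := ((hKl x hx').hasDerivAt.sub (hKr x hx').hasDerivAt)
    rw [key x hx', sub_self] at this
    exact this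
  have hdiff : DifferentiableOn ℝ f (Set.Ioi 0) := fun x hx =>
    ((hdf x hx).differentiableAt).differentiableWithinAt
  have hfd : ∀ x ∈ Set.Ioi (0:ℝ), fderivWithin ℝ f (Set.Ioi 0) x = 0 := by
    intro x hx
    have h1 : fderivWithin ℝ f (Set.Ioi 0) x = fderiv ℝ f x :=
      fderivWithin_of_isOpen isOpen_Ioi hx
    have h2 : fderiv ℝ f x = ContinuousLinearMap.smulRight (1 : ℝ →L[ℝ] ℝ) 0 :=
      (hdf x hx).hasFDerivAt.fderiv
    rw [h1, h2]
    exact ContinuousLinearMap.ext fun y => by simp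
  refine ⟨f 1, fun s hs => ?_⟩
  exact (convex_Ioi (0:ℝ)).is_const_of_fderivWithin_eq_zero hdiff hfd hs (by norm_num)
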